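/- arXiv:2411.07998 — 7 statements merged into one kernel-verified Lean document; each statement's English description precedes it below -/
import Mathlib

section
/- For all g ∈ G and y ∈ Y, the observer map β satisfies β(ρ_g(y)) = φ_g(β(y)); that is, β commutes with the transformation group. -/
/-- The observer map `β(y) = φ_{γ(y)⁻¹}(ℓ(ρ_{γ(y)}(y)))`, built from a
moving frame `γ` (satisfying `γ(ρ_g(y)) * g = γ(y)`), commutes with the transformation
group: `β(ρ_g(y)) = φ_g(β(y))` for all `g ∈ G`, `y ∈ Y`. -/
theorem observer_map_commutes
    {G X Y : Type*} [Group G]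
    (φ : G → X → X) (ρ : G → Y → Y)
    (hφ_id : ∀ x, φ 1 x = x)
    (hφ_comp : ∀ g h x, φ (g * h) x = φ g (φ h x))
    (hρ_id : ∀ y, ρ 1 y = y)
    (hρ_comp : ∀ g h y, ρ (g * h) y = ρ g (ρ h y))
    (γ : Y → G)
    (hγ : ∀ g y, γ (ρ g y) * g = γ y)
    (ℓ : Y → X)
    (β : Y → X)
    (hβ : ∀ y, β y = φ (γ y)⁻¹ (ℓ (ρ (γ y) y))) :
    ∀ (g : G) (y : Y), β (ρ g y) = φ g (β y) := by
  intro g y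
  have hg : γ (ρ g y) = γ y * g⁻¹ := eq_mul_inv_of_mul_eq (hγ g y)
  rw [hβ, hβ, hg, ← hρ_comp, inv_mul_cancel_right, mul_inv_rev, inv_inv, hφ_comp]
end

section
/- For every g ∈ G, ζ ∈ X, x ∈ X, y ∈ Y, and u ∈ U, the derivative of the map y ↦ λ(y; φ_{g⁻¹}(ζ)) at y, applied to the vector h(x, y, u), equals the derivative of the map y ↦ λ(y; ζ) at ρ_g(y), applied to the vector h(φ_g(x), ρ_g(y), ψ_g(u)). -/
/-- Lemma 2 of the paper: with `λ(y; ξ) = φ_{γ(y)}(ξ)` and a `G`-invariant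
vector field `h` on `Y` (i.e. `Dρ_g(y)(h(x,y,u)) = h(φ_g(x), ρ_g(y), ψ_g(u))`), the
derivative of `y ↦ λ(y; φ_{g⁻¹}(ζ))` at `y` applied to `h(x,y,u)` equals the derivative
of `y ↦ λ(y; ζ)` at `ρ_g(y)` applied to `h(φ_g(x), ρ_g(y), ψ_g(u))`. -/
theorem lambda_tangent_invariant
    {G : Type*} [Group G]
    {V W : Type*} (U : Type*)
    [NormedAddCommGroup V] [NormedSpace ℝ V] [FiniteDimensional ℝ V]
    [NormedAddCommGroup W] [NormedSpace ℝ W] [FiniteDimensional ℝ W]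
    (φ : G → V → V) (ρ : G → W → W) (ψ : G → U → U)
    (hφ_id : ∀ x, φ 1 x = x)
    (hφ_comp : ∀ g h x, φ (g * h) x = φ g (φ h x))
    (hρ_id : ∀ y, ρ 1 y = y)
    (hρ_comp : ∀ g h y, ρ (g * h) y = ρ g (ρ h y))
    (hψ_id : ∀ u, ψ 1 u = u)
    (hψ_comp : ∀ g h u, ψ (g * h) u = ψ g (ψ h u))
    (hρ_diff : ∀ g, Differentiable ℝ (ρ g))
    (γ : W → G)
    (hγ : ∀ g y, γ (ρ g y) * g = γ y)
    (hlam_diff : ∀ ξ : V, Differentiable ℝ (fun y : W => φ (γ y) ξ))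
    (h : V → W → U → W)
    (h_inv : ∀ (g : G) (x : V) (y : W) (u : U),
      fderiv ℝ (ρ g) y (h x y u) = h (φ g x) (ρ g y) (ψ g u)) :
    ∀ (g : G) (ζ x : V) (y : W) (u : U),
      fderiv ℝ (fun y' : W => φ (γ y') (φ g⁻¹ ζ)) y (h x y u)
        = fderiv ℝ (fun y' : W => φ (γ y') ζ) (ρ g y)
            (h (φ g x) (ρ g y) (ψ g u)) := by
  intro g ζ x y u
  have hγ' : ∀ y' : W, γ (ρ g y') = γ y' * g⁻¹ := fun y' =>
    eq_mul_inv_of_mul_eq (hγ g y')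
  have hfun : (fun y' : W => φ (γ y') (φ g⁻¹ ζ))
      = (fun y' : W => φ (γ y') ζ) ∘ ρ g := by
    funext y'
    simp only [Function.comp_apply, hγ' y', hφ_comp]
  rw [hfun, fderiv_comp y (hlam_diff ζ (ρ g y))
    (hρ_diff g y)]
  simp [h_inv]
end

section
/- Define α(z, y, u) = f(z + β(y), y, u) − Dβ(y)(h(z + β(y), y, u)) and F(x̂, x, y, u) = α(x̂ − β(y), y, u) + Dβ(y)(h(x, y, u)). Then the state-estimate dynamics are G-invariant: for all g ∈ G, x̂, x ∈ X, y ∈ Y, u ∈ U, A(g)·F(x̂, x, y, u) = F(A(g)x̂, A(g)x, ρ_g(y), ψ_g(u)). -/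
/-- invariance of the pre-observer state-estimate dynamics:
With the linear action `φ_g(x) = A(g)x`, the observer map
`β(y) = A(γ(y))⁻¹ ℓ(ρ_{γ(y)}(y))`,
`α(z,y,u) = f(z + β(y), y, u) − Dβ(y)(h(z + β(y), y, u))`, and
`F(x̂,x,y,u) = α(x̂ − β(y), y, u) + Dβ(y)(h(x,y,u))`,
the state-estimate dynamics are `G`-invariant:
`A(g)·F(x̂,x,y,u) = F(A(g)x̂, A(g)x, ρ_g(y), ψ_g(u))`. -/
theorem pre_observer_dynamics_invariant
    {G : Type*} [Group G]
    {V W : Type*} (U : Type*)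
    [NormedAddCommGroup V] [NormedSpace ℝ V] [FiniteDimensional ℝ V]
    [NormedAddCommGroup W] [NormedSpace ℝ W] [FiniteDimensional ℝ W]
    (A : G → (V ≃L[ℝ] V)) (ρ : G → W → W) (ψ : G → U → U)
    (hA_id : ∀ x, A 1 x = x)
    (hA_comp : ∀ g h x, A (g * h) x = A g (A h x))
    (hρ_id : ∀ y, ρ 1 y = y)
    (hρ_comp : ∀ g h y, ρ (g * h) y = ρ g (ρ h y))
    (hψ_id : ∀ u, ψ 1 u = u)
    (hψ_comp : ∀ g h u, ψ (g * h) u = ψ g (ψ h u))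
    (hρ_diff : ∀ g, Differentiable ℝ (ρ g))
    (γ : W → G)
    (hγ : ∀ g y, γ (ρ g y) * g = γ y)
    (ℓ : W → V) (hℓ_diff : Differentiable ℝ ℓ)
    (β : W → V)
    (hβ : ∀ y, β y = (A (γ y)).symm (ℓ (ρ (γ y) y)))
    (hβ_diff : Differentiable ℝ β)
    (f : V → W → U → V) (hvf : V → W → U → W)
    (f_inv : ∀ (g : G) (x : V) (y : W) (u : U),
      A g (f x y u) = f (A g x) (ρ g y) (ψ g u))
    (h_inv : ∀ (g : G) (x : V) (y : W) (u : U),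
      fderiv ℝ (ρ g) y (hvf x y u) = hvf (A g x) (ρ g y) (ψ g u))
    (α : V → W → U → V)
    (hα : ∀ (z : V) (y : W) (u : U),
      α z y u = f (z + β y) y u - fderiv ℝ β y (hvf (z + β y) y u))
    (F : V → V → W → U → V)
    (hF : ∀ (xhat x : V) (y : W) (u : U),
      F xhat x y u = α (xhat - β y) y u + fderiv ℝ β y (hvf x y u)) :
    ∀ (g : G) (xhat x : V) (y : W) (u : U),
      A g (F xhat x y u) = F (A g xhat) (A g x) (ρ g y) (ψ g u) := by

  intro g xhat x y u
  -- β is equivariant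
  have hβ_equiv : ∀ (g : G) (y : W), β (ρ g y) = A g (β y) := by
    intro g y
    have hγ' : γ (ρ g y) * g = γ y := hγ g y
    have hρeq : ρ (γ (ρ g y)) (ρ g y) = ρ (γ y) y := by
      rw [← hρ_comp, hγ']
    rw [hβ, hβ, hρeq]
    rw [ContinuousLinearEquiv.symm_apply_eq]
    have : A (γ (ρ g y)) (A g ((A (γ y)).symm (ℓ (ρ (γ y) y))))
        = A (γ (ρ g y) * g) ((A (γ y)).symm (ℓ (ρ (γ y) y))) := by
      rw [hA_comp]
    rw [this, hγ', ContinuousLinearEquiv.apply_symm_apply]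
  -- derivative equivariance of β
  have hDβ : ∀ (v : W),
      fderiv ℝ β (ρ g y) (fderiv ℝ (ρ g) y v) = A g (fderiv ℝ β y v) := by
    intro v
    have hcomp : (fun y => A g (β y)) = β ∘ ρ g := by
      funext z
      simp [Function.comp, hβ_equiv g z]
    have h1 : fderiv ℝ (β ∘ ρ g) y = (fderiv ℝ β (ρ g y)).comp (fderiv ℝ (ρ g) y) :=
      fderiv_comp y (hβ_diff (ρ g y)) ((hρ_diff g) y)
    have h2 : fderiv ℝ ((A g) ∘ β) y
        = ((A g : V →L[ℝ] V)).comp (fderiv ℝ β y) := (A g).comp_fderiv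
    have h3 : ((A g : V →L[ℝ] V)).comp (fderiv ℝ β y)
        = (fderiv ℝ β (ρ g y)).comp (fderiv ℝ (ρ g) y) := by
      rw [← h2, show (A g) ∘ β = β ∘ ρ g from hcomp, h1]
    have := congrArg (fun (L : W →L[ℝ] V) => L v) h3
    simpa using this.symm
  have hz : A g xhat - β (ρ g y) = A g (xhat - β y) := by
    rw [hβ_equiv g y, ← map_sub]
  have hz2 : A g (xhat - β y) + β (ρ g y) = A g (xhat - β y + β y) := by
    rw [hβ_equiv g y, ← map_add]
  rw [hF, hF, hα, hα, hz, hz2]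
  have hx : xhat - β y + β y = xhat := by abel
  rw [hx]
  rw [← f_inv, ← h_inv, ← h_inv, hDβ, hDβ]
  simp [map_add, map_sub, hx]
end

section
/- Suppose on an interval [t₀, t₁] the differentiable curves x(t) ∈ X, y(t) ∈ Y, z(t) ∈ X and the signal u(t) ∈ U satisfy ẋ = f(x, y, u), ẏ = h(x, y, u), and ż = α(z, y, u), where α(z, y, u) = f(z + β(y), y, u) − Dβ(y)(h(z + β(y), y, u)). If z(t₀) = x(t₀) − β(y(t₀)) and for each t the map z ↦ α(z, y(t), u(t)) is Lipschitz with a constant uniform in t, then z(t) = x(t) − β(y(t)) for all t ∈ [t₀, t₁]; that is, the zero-error manifold {(z, x, y) : z = x − β(y)} is positively invariant. -/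
open Set in
/-- positive invariance of the zero-error manifold:
if `ẋ = f(x,y,u)`, `ẏ = h(x,y,u)`, `ż = α(z,y,u)` on `[t₀, t₁]` where
`α(z,y,u) = f(z + β(y), y, u) − Dβ(y)(h(z + β(y), y, u))`, the initial condition
satisfies `z(t₀) = x(t₀) − β(y(t₀))`, and `z ↦ α(z, y(t), u(t))` is Lipschitz with a
constant uniform in `t`, then `z(t) = x(t) − β(y(t))` for all `t ∈ [t₀, t₁]`. -/
theorem zero_error_manifold_positively_invariant
    {n : ℕ} {W U : Type*}
    [NormedAddCommGroup W] [NormedSpace ℝ W] [FiniteDimensional ℝ W]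
    (f : EuclideanSpace ℝ (Fin n) → W → U → EuclideanSpace ℝ (Fin n))
    (hvf : EuclideanSpace ℝ (Fin n) → W → U → W)
    (hf_cont : ∀ u : U, Continuous fun p : EuclideanSpace ℝ (Fin n) × W => f p.1 p.2 u)
    (hh_cont : ∀ u : U, Continuous fun p : EuclideanSpace ℝ (Fin n) × W => hvf p.1 p.2 u)
    (β : W → EuclideanSpace ℝ (Fin n))
    (hβ : ContDiff ℝ 1 β)
    (α : EuclideanSpace ℝ (Fin n) → W → U → EuclideanSpace ℝ (Fin n))
    (hα : ∀ z y u, α z y u = f (z + β y) y u - fderiv ℝ β y (hvf (z + β y) y u))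
    (t₀ t₁ : ℝ) (ht : t₀ ≤ t₁)
    (x z : ℝ → EuclideanSpace ℝ (Fin n)) (y : ℝ → W) (u : ℝ → U)
    (hx : ∀ t ∈ Icc t₀ t₁, HasDerivAt x (f (x t) (y t) (u t)) t)
    (hy : ∀ t ∈ Icc t₀ t₁, HasDerivAt y (hvf (x t) (y t) (u t)) t)
    (hz : ∀ t ∈ Icc t₀ t₁, HasDerivAt z (α (z t) (y t) (u t)) t)
    (K : NNReal)
    (hLip : ∀ t ∈ Icc t₀ t₁, LipschitzWith K (fun ζ => α ζ (y t) (u t)))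
    (h0 : z t₀ = x t₀ - β (y t₀)) :
    ∀ t ∈ Icc t₀ t₁, z t = x t - β (y t) := by
  set v : ℝ → EuclideanSpace ℝ (Fin n) → EuclideanSpace ℝ (Fin n) :=
    fun t ζ => if t ∈ Icc t₀ t₁ then α ζ (y t) (u t) else 0 with hv_def
  have hv : ∀ t, LipschitzOnWith K (v t) (univ : Set (EuclideanSpace ℝ (Fin n))) := by
    intro t
    by_cases h : t ∈ Icc t₀ t₁
    · have he : v t = fun ζ => α ζ (y t) (u t) := funext fun ζ => if_pos h
      rw [he]; exact (hLip t h).lipschitzOnWith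
    · have he : v t = fun _ => 0 := funext fun ζ => if_neg h
      rw [he]; exact (LipschitzWith.const' 0).lipschitzOnWith
  set w : ℝ → EuclideanSpace ℝ (Fin n) := fun t => x t - β (y t) with hw_def
  have hw' : ∀ t ∈ Icc t₀ t₁, HasDerivAt w (α (w t) (y t) (u t)) t := by
    intro t htm
    have hβy : HasDerivAt (fun s => β (y s)) (fderiv ℝ β (y t) (hvf (x t) (y t) (u t))) t :=
      (hβ.differentiable one_ne_zero (y t)).hasFDerivAt.comp_hasDerivAt t (hy t htm)
    have : w t + β (y t) = x t := by simp [hw_def]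
    have := (hx t htm).sub hβy
    rw [hα]
    simp only [hw_def, sub_add_cancel]
    exact this
  have key : EqOn z w (Icc t₀ t₁) := by
    apply ODE_solution_unique_of_mem_Icc_right (fun t _ => hv t)
    · exact fun t htm => ((hz t htm).continuousAt).continuousWithinAt
    · intro t htm
      have htm' : t ∈ Icc t₀ t₁ := Ico_subset_Icc_self htm
      rw [show v t (z t) = α (z t) (y t) (u t) from if_pos htm']
      exact (hz t htm').hasDerivWithinAt
    · exact fun t _ => mem_univ _
    · intro t htm
      exact ((hw' t htm).continuousAt).continuousWithinAt
    · intro t htm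
      have htm' : t ∈ Icc t₀ t₁ := Ico_subset_Icc_self htm
      rw [show v t (w t) = α (w t) (y t) (u t) from if_pos htm']
      exact (hw' t htm').hasDerivWithinAt
    · exact fun t _ => mem_univ _
    · simpa [hw_def] using h0
  exact fun t htm => key htm
end

section
/- Let x(t), y(t), z(t), u(t) be curves satisfying ẋ = f(x, y, u), ẏ = h(x, y, u), ż = α(z, y, u) with α(z, y, u) = f(z + β(y), y, u) − Dβ(y)(h(z + β(y), y, u)). Define the invariants X(t) = A(γ(y(t)))x(t), Y(t) = ρ_{γ(y(t))}(y(t)), U(t) = ψ_{γ(y(t))}(u(t)) and the invariant error η(t) = A(γ(y(t)))z(t) + ℓ(Y(t)) − A(γ(y(t)))x(t). Then η is differentiable and satisfies the invariant error system η̇ = f(X + η, Y, U) − f(X, Y, U) − Dβ(Y)(h(X + η, Y, U) − h(X, Y, U)) + D_y[λ(·; η)](Y)(h(X, Y, U)), where λ(y; ξ) = A(γ(y))ξ and D_y[λ(·; η)](Y) denotes the Fréchet derivative of y ↦ A(γ(y))η at y = Y with η held fixed. -/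
/-- the invariant error system, Theorem 2 of the paper:
along trajectories of the system `ẋ = f(x,y,u)`, `ẏ = h(x,y,u)` and of the
pre-observer `ż = α(z,y,u)` with
`α(z,y,u) = f(z + β(y), y, u) − Dβ(y)(h(z + β(y), y, u))`, the invariant error
`η = A(γ(y))z + ℓ(Y) − A(γ(y))x` (where `X = A(γ(y))x`, `Y = ρ_{γ(y)}(y)`,
`U = ψ_{γ(y)}(u)`) is differentiable and satisfies
`η̇ = f(X+η,Y,U) − f(X,Y,U) − Dβ(Y)(h(X+η,Y,U) − h(X,Y,U)) + D_y[λ(·;η)](Y)(h(X,Y,U))`,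
where `λ(y;ξ) = A(γ(y))ξ`. -/
theorem invariant_error_system
    {G : Type*} [Group G]
    {V W : Type*} (U : Type*)
    [NormedAddCommGroup V] [NormedSpace ℝ V] [FiniteDimensional ℝ V]
    [NormedAddCommGroup W] [NormedSpace ℝ W] [FiniteDimensional ℝ W]
    (A : G → (V ≃L[ℝ] V)) (ρ : G → W → W) (ψ : G → U → U)
    (hA_id : ∀ x, A 1 x = x)
    (hA_comp : ∀ g h x, A (g * h) x = A g (A h x))
    (hρ_id : ∀ y, ρ 1 y = y)
    (hρ_comp : ∀ g h y, ρ (g * h) y = ρ g (ρ h y))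
    (hψ_id : ∀ u, ψ 1 u = u)
    (hψ_comp : ∀ g h u, ψ (g * h) u = ψ g (ψ h u))
    (hρ_diff : ∀ g, ContDiff ℝ 1 (ρ g))
    (γ : W → G)
    (hγ : ∀ g y, γ (ρ g y) * g = γ y)
    (hAγ_smooth : ContDiff ℝ 1 (fun y : W => (A (γ y) : V →L[ℝ] V)))
    (ℓ : W → V) (hℓ_smooth : ContDiff ℝ 1 ℓ)
    (β : W → V)
    (hβ : ∀ y, β y = (A (γ y)).symm (ℓ (ρ (γ y) y)))
    (hβ_smooth : ContDiff ℝ 1 β)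
    (f : V → W → U → V) (hvf : V → W → U → W)
    (f_inv : ∀ (g : G) (x : V) (y : W) (u : U),
      A g (f x y u) = f (A g x) (ρ g y) (ψ g u))
    (h_inv : ∀ (g : G) (x : V) (y : W) (u : U),
      fderiv ℝ (ρ g) y (hvf x y u) = hvf (A g x) (ρ g y) (ψ g u))
    (α : V → W → U → V)
    (hα : ∀ (z : V) (y : W) (u : U),
      α z y u = f (z + β y) y u - fderiv ℝ β y (hvf (z + β y) y u))
    (xc zc : ℝ → V) (yc : ℝ → W) (uc : ℝ → U)
    (hxc : ∀ t, HasDerivAt xc (f (xc t) (yc t) (uc t)) t)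
    (hyc : ∀ t, HasDerivAt yc (hvf (xc t) (yc t) (uc t)) t)
    (hzc : ∀ t, HasDerivAt zc (α (zc t) (yc t) (uc t)) t)
    (Xc : ℝ → V) (hXc : ∀ t, Xc t = A (γ (yc t)) (xc t))
    (Yc : ℝ → W) (hYc : ∀ t, Yc t = ρ (γ (yc t)) (yc t))
    (Uc : ℝ → U) (hUc : ∀ t, Uc t = ψ (γ (yc t)) (uc t))
    (η : ℝ → V)
    (hη : ∀ t, η t = A (γ (yc t)) (zc t) + ℓ (Yc t) - A (γ (yc t)) (xc t)) :
    ∀ t : ℝ,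
      HasDerivAt η
        (f (Xc t + η t) (Yc t) (Uc t) - f (Xc t) (Yc t) (Uc t)
          - fderiv ℝ β (Yc t)
              (hvf (Xc t + η t) (Yc t) (Uc t) - hvf (Xc t) (Yc t) (Uc t))
          + fderiv ℝ (fun y' : W => A (γ y') (η t)) (Yc t)
              (hvf (Xc t) (Yc t) (Uc t))) t := by
  intro t
  -- basic algebraic facts
  have hAsymm : ∀ (k : G) (x : V), (A k).symm x = A k⁻¹ x := by
    intro k x
    rw [ContinuousLinearEquiv.symm_apply_eq, ← hA_comp, mul_inv_cancel, hA_id]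
  have hγρ : ∀ (g : G) (y : W), γ (ρ g y) = γ y * g⁻¹ := fun g y =>
    eq_mul_inv_of_mul_eq (hγ g y)
  have hβd : ∀ y, DifferentiableAt ℝ β y := fun y => hβ_smooth.differentiable one_ne_zero y
  have hρd : ∀ (g : G) (y : W), DifferentiableAt ℝ (ρ g) y := fun g y =>
    (hρ_diff g).differentiable one_ne_zero y
  have hΦd : ∀ y, DifferentiableAt ℝ (fun y : W => (A (γ y) : V →L[ℝ] V)) y := fun y =>
    hAγ_smooth.differentiable one_ne_zero y
  -- chain rule along ρ g
  have chain : ∀ (F1 F2 : W → V) (g : G) (y : W) (v : W),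
      (∀ y', F1 (ρ g y') = F2 y') → DifferentiableAt ℝ F1 (ρ g y) →
      fderiv ℝ F2 y v = fderiv ℝ F1 (ρ g y) (fderiv ℝ (ρ g) y v) := by
    intro F1 F2 g y v hcomp hF1
    have h2 : F2 = F1 ∘ ρ g := funext fun y' => (hcomp y').symm
    rw [h2, fderiv_comp y hF1 (hρd g y)]
    rfl
  -- equivariance of β
  have hβ_eq : ∀ (g : G) (y : W), β (ρ g y) = A g (β y) := by
    intro g y
    rw [hβ (ρ g y), hβ y, hγρ, hAsymm, hAsymm, ← hρ_comp, inv_mul_cancel_right,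
      mul_inv_rev, inv_inv, hA_comp]
  -- equivariance of the derivative of β
  have hDβ : ∀ (g : G) (y : W) (v : W),
      fderiv ℝ β (ρ g y) (fderiv ℝ (ρ g) y v) = A g (fderiv ℝ β y v) := by
    intro g y v
    rw [← chain β (fun y' => A g (β y')) g y v (fun y' => hβ_eq g y') (hβd _)]
    have hcd : fderiv ℝ (fun y' => A g (β y')) y = (A g : V →L[ℝ] V).comp (fderiv ℝ β y) := by
      have h3 : (fun y' : W => A g (β y')) = (⇑(A g) ∘ β) := rfl
      rw [h3, fderiv_comp y ((A g).differentiableAt) (hβd y), (A g).fderiv]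
    rw [hcd]
    rfl
  -- equivariance of the frame map applied to a fixed vector
  have hF_eq : ∀ (g : G) (ξ : V) (y' : W), A (γ (ρ g y')) (A g ξ) = A (γ y') ξ := by
    intro g ξ y'
    rw [hγρ, ← hA_comp, inv_mul_cancel_right]
  have hFd : ∀ (ξ : V) (y : W), DifferentiableAt ℝ (fun y' : W => A (γ y') ξ) y := by
    intro ξ y
    exact (hΦd y).clm_apply (differentiableAt_const ξ)
  have hDF : ∀ (g : G) (ξ : V) (y : W) (v : W),
      fderiv ℝ (fun y' : W => A (γ y') (A g ξ)) (ρ g y) (fderiv ℝ (ρ g) y v)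
        = fderiv ℝ (fun y' : W => A (γ y') ξ) y v := fun g ξ y v =>
    (chain (fun y' : W => A (γ y') (A g ξ)) (fun y' : W => A (γ y') ξ) g y v
      (fun y' => hF_eq g ξ y') (hFd _ _)).symm
  have L3 : ∀ (ξ : V) (y : W) (v : W),
      fderiv ℝ (fun y' : W => A (γ y') ξ) y v
        = (fderiv ℝ (fun y : W => (A (γ y) : V →L[ℝ] V)) y v) ξ := by
    intro ξ y v
    have h : fderiv ℝ (fun y' : W => A (γ y') ξ) y
        = ((fun y : W => (A (γ y) : V →L[ℝ] V)) y).comp (fderiv ℝ (fun _ : W => ξ) y)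
          + (fderiv ℝ (fun y : W => (A (γ y) : V →L[ℝ] V)) y).flip ξ :=
      fderiv_clm_apply (hΦd y) (differentiableAt_const ξ)
    rw [h]
    simp
  -- rewriting η
  have hηw : ∀ s, η s = A (γ (yc s)) (zc s + β (yc s) - xc s) := by
    intro s
    have h1 : ℓ (Yc s) = A (γ (yc s)) (β (yc s)) := by
      rw [hYc, hβ, (A (γ (yc s))).apply_symm_apply]
    rw [hη, h1, map_sub, map_add]
  -- the product-rule derivative of η
  have hMd : HasDerivAt (fun s => (fun y : W => (A (γ y) : V →L[ℝ] V)) (yc s))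
      (fderiv ℝ (fun y : W => (A (γ y) : V →L[ℝ] V)) (yc t) (hvf (xc t) (yc t) (uc t))) t :=
    (hΦd (yc t)).hasFDerivAt.comp_hasDerivAt t (hyc t)
  have hβc : HasDerivAt (fun s => β (yc s))
      (fderiv ℝ β (yc t) (hvf (xc t) (yc t) (uc t))) t :=
    (hβd (yc t)).hasFDerivAt.comp_hasDerivAt t (hyc t)
  have hw : HasDerivAt (fun s => zc s + β (yc s) - xc s)
      (α (zc t) (yc t) (uc t) + fderiv ℝ β (yc t) (hvf (xc t) (yc t) (uc t))
        - f (xc t) (yc t) (uc t)) t := ((hzc t).add hβc).sub (hxc t)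
  have hprod := hMd.clm_apply hw
  have hηd : HasDerivAt η
      ((fderiv ℝ (fun y : W => (A (γ y) : V →L[ℝ] V)) (yc t) (hvf (xc t) (yc t) (uc t)))
          (zc t + β (yc t) - xc t)
        + A (γ (yc t))
            (α (zc t) (yc t) (uc t) + fderiv ℝ β (yc t) (hvf (xc t) (yc t) (uc t))
              - f (xc t) (yc t) (uc t))) t :=
    hprod.congr_of_eventuallyEq (Filter.Eventually.of_forall hηw)
  -- key pointwise identities at time t
  have hηA : η t = A (γ (yc t)) (zc t + β (yc t) - xc t) := hηw t
  have hAw : A (γ (yc t)) (zc t + β (yc t)) = Xc t + η t := by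
    rw [hηA, hXc, map_sub, map_add]
    abel
  have e1 : (fderiv ℝ (fun y : W => (A (γ y) : V →L[ℝ] V)) (yc t) (hvf (xc t) (yc t) (uc t)))
        (zc t + β (yc t) - xc t)
      = fderiv ℝ (fun y' : W => A (γ y') (η t)) (Yc t) (hvf (Xc t) (Yc t) (Uc t)) := by
    rw [← L3 (zc t + β (yc t) - xc t) (yc t) (hvf (xc t) (yc t) (uc t)),
      ← hDF (γ (yc t)) (zc t + β (yc t) - xc t) (yc t) (hvf (xc t) (yc t) (uc t)),
      ← hηA, h_inv, ← hXc, ← hYc, ← hUc]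
  have e2 : A (γ (yc t)) (α (zc t) (yc t) (uc t))
      = f (Xc t + η t) (Yc t) (Uc t)
        - fderiv ℝ β (Yc t) (hvf (Xc t + η t) (Yc t) (Uc t)) := by
    rw [hα, map_sub, f_inv, ← hDβ, h_inv, hAw, ← hYc, ← hUc]
  have e3 : A (γ (yc t)) (fderiv ℝ β (yc t) (hvf (xc t) (yc t) (uc t)))
      = fderiv ℝ β (Yc t) (hvf (Xc t) (Yc t) (Uc t)) := by
    rw [← hDβ, h_inv, ← hXc, ← hYc, ← hUc]
  have e4 : A (γ (yc t)) (f (xc t) (yc t) (uc t)) = f (Xc t) (Yc t) (Uc t) := by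
    rw [f_inv, ← hXc, ← hYc, ← hUc]
  have hfinal : (fderiv ℝ (fun y : W => (A (γ y) : V →L[ℝ] V)) (yc t) (hvf (xc t) (yc t) (uc t)))
          (zc t + β (yc t) - xc t)
        + A (γ (yc t))
            (α (zc t) (yc t) (uc t) + fderiv ℝ β (yc t) (hvf (xc t) (yc t) (uc t))
              - f (xc t) (yc t) (uc t))
      = f (Xc t + η t) (Yc t) (Uc t) - f (Xc t) (Yc t) (Uc t)
          - fderiv ℝ β (Yc t)
              (hvf (Xc t + η t) (Yc t) (Uc t) - hvf (Xc t) (Yc t) (Uc t))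
          + fderiv ℝ (fun y' : W => A (γ y') (η t)) (Yc t)
              (hvf (Xc t) (Yc t) (Uc t)) := by
    rw [e1, (A (γ (yc t))).map_sub, (A (γ (yc t))).map_add, e2, e3, e4,
      (fderiv ℝ β (Yc t)).map_sub]
    abel
  exact hfinal ▸ hηd
end

section
/- Let v, q, z, ω, a : ℝ → ℝ³ and R : ℝ → ℝ^{3×3} be differentiable curves with R(t) R(t)ᵀ = I for all t, satisfying the rigid-body equations v̇ = v × ω + Rᵀ g + a, q̇ = R v, Ṙ = R ⟦ω⟧, and the observer equation ż = (z + Rᵀ L q) × ω + Rᵀ g + a + ⟦ω⟧ Rᵀ L q − Rᵀ L R (z + Rᵀ L q). Then the invariant error η(t) = R(t) z(t) + L q(t) − R(t) v(t) satisfies the linear differential equation η̇(t) = −L η(t) for all t. -/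
open Matrix

attribute [local instance] Matrix.normedAddCommGroup Matrix.normedSpace

/-- The skew-symmetric cross-product-equivalent matrix `⟦ξ⟧`, satisfying
`⟦ξ⟧ η = ξ × η` for all `η ∈ ℝ³`. -/
def skew (ξ : Fin 3 → ℝ) : Matrix (Fin 3) (Fin 3) ℝ :=
  !![0, -ξ 2, ξ 1; ξ 2, 0, -ξ 0; -ξ 1, ξ 0, 0]


lemma hasDerivAt_entry {M : ℝ → Matrix (Fin 3) (Fin 3) ℝ} {M' : Matrix (Fin 3) (Fin 3) ℝ} {t : ℝ}
    (h : HasDerivAt M M' t) (i j : Fin 3) : HasDerivAt (fun s => M s i j) (M' i j) t := by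
  let l : Matrix (Fin 3) (Fin 3) ℝ →ₗ[ℝ] ℝ :=
    { toFun := fun A => A i j, map_add' := by intros; rfl, map_smul' := by intros; rfl }
  have := (l.toContinuousLinearMap.hasFDerivAt (x := M t)).comp_hasDerivAt t h
  exact this

lemma skew_mulVec (ξ η : Fin 3 → ℝ) : (skew ξ).mulVec η = ξ ⨯₃ η := by
  funext i
  fin_cases i <;>
    simp [skew, Matrix.mulVec, dotProduct, crossProduct, Fin.sum_univ_three] <;> ring

lemma hasDerivAt_mulVec {M : ℝ → Matrix (Fin 3) (Fin 3) ℝ} {u : ℝ → Fin 3 → ℝ}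
    {M' : Matrix (Fin 3) (Fin 3) ℝ} {u' : Fin 3 → ℝ} {t : ℝ}
    (hM : HasDerivAt M M' t) (hu : HasDerivAt u u' t) :
    HasDerivAt (fun s => (M s).mulVec (u s)) (M'.mulVec (u t) + (M t).mulVec u') t := by
  rw [hasDerivAt_pi]
  intro i
  have : ∀ s, (M s).mulVec (u s) i = ∑ j, M s i j * u s j := by
    intro s; simp [Matrix.mulVec, dotProduct]
  simp only [this]
  have hd : HasDerivAt (fun s => ∑ j, M s i j * u s j)
      (∑ j, (M' i j * u t j + M t i j * u' j)) t := by
    apply HasDerivAt.fun_sum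
    intro j _
    exact (hasDerivAt_entry hM i j).mul ((hasDerivAt_pi.1 hu) j)
  convert hd using 1
  · rfl
  · rfl
  simp [Matrix.mulVec, dotProduct, Finset.sum_add_distrib]

/-- along trajectories of the rigid-body equations
`v̇ = v × ω + Rᵀ g + a`, `q̇ = R v`, `Ṙ = R ⟦ω⟧` (with `R(t) R(t)ᵀ = I`) and of the
observer `ż = (z + Rᵀ L q) × ω + Rᵀ g + a + ⟦ω⟧ Rᵀ L q − Rᵀ L R (z + Rᵀ L q)`,
the invariant error `η(t) = R(t) z(t) + L q(t) − R(t) v(t)` satisfies `η̇ = −L η`. -/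
theorem rigid_body_invariant_error_linear_dynamics
    (g : Fin 3 → ℝ) (L : Matrix (Fin 3) (Fin 3) ℝ)
    (v q z ω a : ℝ → (Fin 3 → ℝ)) (R : ℝ → Matrix (Fin 3) (Fin 3) ℝ)
    (hR_orth : ∀ t, R t * (R t)ᵀ = 1)
    (hv : ∀ t, HasDerivAt v (v t ⨯₃ ω t + (R t)ᵀ.mulVec g + a t) t)
    (hq : ∀ t, HasDerivAt q ((R t).mulVec (v t)) t)
    (hR : ∀ t, HasDerivAt R (R t * skew (ω t)) t)
    (hz : ∀ t, HasDerivAt z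
      ((z t + (R t)ᵀ.mulVec (L.mulVec (q t))) ⨯₃ ω t + (R t)ᵀ.mulVec g + a t
        + (skew (ω t)).mulVec ((R t)ᵀ.mulVec (L.mulVec (q t)))
        - (R t)ᵀ.mulVec (L.mulVec ((R t).mulVec
            (z t + (R t)ᵀ.mulVec (L.mulVec (q t)))))) t)
    (η : ℝ → (Fin 3 → ℝ))
    (hη : ∀ t, η t = (R t).mulVec (z t) + L.mulVec (q t) - (R t).mulVec (v t)) :
    ∀ t, HasDerivAt η (-(L.mulVec (η t))) t := by
  intro t
  have hηf : η = fun s => (R s).mulVec (z s) + L.mulVec (q s) - (R s).mulVec (v s) :=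
    funext hη
  rw [hηf]
  have h1 := hasDerivAt_mulVec (hR t) (hz t)
  have h2 := hasDerivAt_mulVec (hasDerivAt_const t L) (hq t)
  have h3 := hasDerivAt_mulVec (hR t) (hv t)
  have hd := (h1.add h2).sub h3
  convert hd using 1
  · rfl
  · rfl
  · rfl
  · rfl
  have hRR : ∀ w, (R t).mulVec ((R t)ᵀ.mulVec w) = w := by
    intro w; rw [Matrix.mulVec_mulVec, hR_orth, Matrix.one_mulVec]
  have hx : ∀ x : Fin 3 → ℝ, x ⨯₃ ω t = -((skew (ω t)).mulVec x) := by
    intro x; rw [skew_mulVec, cross_anticomm]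
  beta_reduce
  simp only [hx, ← Matrix.mulVec_mulVec, Matrix.zero_mulVec, Matrix.mulVec_add,
    Matrix.mulVec_sub, Matrix.mulVec_neg, hRR, neg_sub, neg_add, zero_add]
  abel
end

section
/- Let v, q, z, ω, a : ℝ → ℝ³ and R : ℝ → ℝ^{3×3} be differentiable curves with R(t) R(t)ᵀ = I for all t, satisfying v̇ = v × ω + Rᵀ g + a, q̇ = R v, Ṙ = R ⟦ω⟧, and ż = (z + Rᵀ L q) × ω + Rᵀ g + a + ⟦ω⟧ Rᵀ L q − Rᵀ L R (z + Rᵀ L q). Suppose there exists m > 0 such that ⟨L ξ, ξ⟩ ≥ m ‖ξ‖² for all ξ ∈ ℝ³. Then the velocity estimate v̂(t) = z(t) + R(t)ᵀ L q(t) converges globally exponentially to v(t): for all t ≥ t₀, ‖v̂(t) − v(t)‖ ≤ e^{−m(t−t₀)} ‖v̂(t₀) − v(t₀)‖. -/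
open Matrix

attribute [local instance] Matrix.normedAddCommGroup Matrix.normedSpace

/-- The Euclidean norm on `ℝ³`. -/
noncomputable def enorm3 (ξ : Fin 3 → ℝ) : ℝ :=
  Real.sqrt (∑ i, ξ i ^ 2)

lemma skew_transpose (w : Fin 3 → ℝ) : (skew w)ᵀ = -skew w := by
  ext i j
  fin_cases i <;> fin_cases j <;> simp [skew]

lemma keyvec (L P : Matrix (Fin 3) (Fin 3) ℝ) (zz qq vv ww gg aa : Fin 3 → ℝ) :
    ((zz + Pᵀ *ᵥ (L *ᵥ qq)) ⨯₃ ww + Pᵀ *ᵥ gg + aa + skew ww *ᵥ (Pᵀ *ᵥ (L *ᵥ qq))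
        - Pᵀ *ᵥ (L *ᵥ (P *ᵥ (zz + Pᵀ *ᵥ (L *ᵥ qq)))))
      + ((P * skew ww)ᵀ *ᵥ (L *ᵥ qq) + Pᵀ *ᵥ (L *ᵥ (P *ᵥ vv)))
      - (vv ⨯₃ ww + Pᵀ *ᵥ gg + aa)
    = (zz + Pᵀ *ᵥ (L *ᵥ qq) - vv) ⨯₃ ww
        - Pᵀ *ᵥ (L *ᵥ (P *ᵥ (zz + Pᵀ *ᵥ (L *ᵥ qq) - vv))) := by
  have c1 : (zz + Pᵀ *ᵥ (L *ᵥ qq) - vv) ⨯₃ ww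
      = (zz + Pᵀ *ᵥ (L *ᵥ qq)) ⨯₃ ww - vv ⨯₃ ww := by
    rw [map_sub, LinearMap.sub_apply]
  have c2 : Pᵀ *ᵥ (L *ᵥ (P *ᵥ (zz + Pᵀ *ᵥ (L *ᵥ qq) - vv)))
      = Pᵀ *ᵥ (L *ᵥ (P *ᵥ (zz + Pᵀ *ᵥ (L *ᵥ qq)))) - Pᵀ *ᵥ (L *ᵥ (P *ᵥ vv)) := by
    rw [mulVec_sub, mulVec_sub, mulVec_sub]
  have c3 : (P * skew ww)ᵀ *ᵥ (L *ᵥ qq) = -(skew ww *ᵥ (Pᵀ *ᵥ (L *ᵥ qq))) := by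
    rw [transpose_mul, skew_transpose, Matrix.neg_mul, neg_mulVec, ← mulVec_mulVec]
  rw [c1, c2, c3]
  abel

set_option maxHeartbeats 1000000 in
/-- along trajectories of the rigid-body equations
`v̇ = v × ω + Rᵀ g + a`, `q̇ = R v`, `Ṙ = R ⟦ω⟧` (with `R(t) R(t)ᵀ = I`) and of the
observer `ż = (z + Rᵀ L q) × ω + Rᵀ g + a + ⟦ω⟧ Rᵀ L q − Rᵀ L R (z + Rᵀ L q)`,
if `⟨L ξ, ξ⟩ ≥ m ‖ξ‖²` for some `m > 0` (Euclidean inner product and norm), then the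
velocity estimate `v̂ = z + Rᵀ L q` converges globally exponentially to `v`:
`‖v̂(t) − v(t)‖ ≤ e^{−m(t−t₀)} ‖v̂(t₀) − v(t₀)‖` for all `t ≥ t₀`. -/
theorem rigid_body_velocity_observer_exponential_convergence
    (g : Fin 3 → ℝ) (L : Matrix (Fin 3) (Fin 3) ℝ)
    (v q z ω a : ℝ → (Fin 3 → ℝ)) (R : ℝ → Matrix (Fin 3) (Fin 3) ℝ)
    (hR_orth : ∀ t, R t * (R t)ᵀ = 1)
    (hv : ∀ t, HasDerivAt v (v t ⨯₃ ω t + (R t)ᵀ.mulVec g + a t) t)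
    (hq : ∀ t, HasDerivAt q ((R t).mulVec (v t)) t)
    (hR : ∀ t, HasDerivAt R (R t * skew (ω t)) t)
    (hz : ∀ t, HasDerivAt z
      ((z t + (R t)ᵀ.mulVec (L.mulVec (q t))) ⨯₃ ω t + (R t)ᵀ.mulVec g + a t
        + (skew (ω t)).mulVec ((R t)ᵀ.mulVec (L.mulVec (q t)))
        - (R t)ᵀ.mulVec (L.mulVec ((R t).mulVec
            (z t + (R t)ᵀ.mulVec (L.mulVec (q t)))))) t)
    (m : ℝ) (hm : 0 < m)
    (hL_coercive : ∀ ξ : Fin 3 → ℝ, m * (∑ i, ξ i ^ 2) ≤ ∑ i, L.mulVec ξ i * ξ i)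
    (vhat : ℝ → (Fin 3 → ℝ))
    (hvhat : ∀ t, vhat t = z t + (R t)ᵀ.mulVec (L.mulVec (q t))) :
    ∀ t₀ t : ℝ, t₀ ≤ t →
      enorm3 (vhat t - v t)
        ≤ Real.exp (-(m * (t - t₀))) * enorm3 (vhat t₀ - v t₀) := by
  intro t₀ t ht
  have hRtR : ∀ s, (R s)ᵀ * R s = 1 := fun s => mul_eq_one_comm.mp (hR_orth s)
  set E : ℝ → Fin 3 → ℝ := fun s =>
    (vhat s - v s) ⨯₃ ω s - (R s)ᵀ *ᵥ (L *ᵥ (R s *ᵥ (vhat s - v s))) with hEdef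
  have hE : ∀ s (i : Fin 3), HasDerivAt (fun u => vhat u i - v u i) (E s i) s := by
    intro s i
    have hRe : ∀ j k, HasDerivAt (fun u => R u j k) ((R s * skew (ω s)) j k) s :=
      fun j k => hasDerivAt_pi.mp (hasDerivAt_pi.mp (hR s) j) k
    have hqe : ∀ k, HasDerivAt (fun u => q u k) ((R s *ᵥ v s) k) s :=
      fun k => hasDerivAt_pi.mp (hq s) k
    have hve : HasDerivAt (fun u => v u i)
        ((v s ⨯₃ ω s + (R s)ᵀ *ᵥ g + a s) i) s := hasDerivAt_pi.mp (hv s) i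
    have hze : HasDerivAt (fun u => z u i)
        (((z s + (R s)ᵀ.mulVec (L.mulVec (q s))) ⨯₃ ω s + (R s)ᵀ.mulVec g + a s
          + (skew (ω s)).mulVec ((R s)ᵀ.mulVec (L.mulVec (q s)))
          - (R s)ᵀ.mulVec (L.mulVec ((R s).mulVec
              (z s + (R s)ᵀ.mulVec (L.mulVec (q s)))))) i) s :=
      hasDerivAt_pi.mp (hz s) i
    have hfun : (fun u => vhat u i - v u i)
        = fun u => z u i + (∑ j, R u j i * ∑ k, L j k * q u k) - v u i := by
      funext u
      rw [hvhat]
      simp [Matrix.mulVec, dotProduct, Matrix.mul_apply, Matrix.transpose_apply,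
        Fin.sum_univ_three]
      ring
    have h1 : HasDerivAt
        (fun u => z u i + (∑ j, R u j i * ∑ k, L j k * q u k) - v u i)
        ((((z s + (R s)ᵀ.mulVec (L.mulVec (q s))) ⨯₃ ω s + (R s)ᵀ.mulVec g + a s
          + (skew (ω s)).mulVec ((R s)ᵀ.mulVec (L.mulVec (q s)))
          - (R s)ᵀ.mulVec (L.mulVec ((R s).mulVec
              (z s + (R s)ᵀ.mulVec (L.mulVec (q s)))))) i
          + (∑ j, ((R s * skew (ω s)) j i * (∑ k, L j k * q s k)
              + R s j i * (∑ k, L j k * ((R s *ᵥ v s) k)))))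
         - (v s ⨯₃ ω s + (R s)ᵀ *ᵥ g + a s) i) s :=
      (hze.add (HasDerivAt.fun_sum fun j _ => (hRe j i).mul
        (HasDerivAt.fun_sum fun k _ => HasDerivAt.const_mul (L j k) (hqe k)))).sub hve
    have hm1 : (∑ j, ((R s * skew (ω s)) j i * (∑ k, L j k * q s k)
          + R s j i * (∑ k, L j k * ((R s *ᵥ v s) k))))
        = (((R s * skew (ω s))ᵀ *ᵥ (L *ᵥ q s))
            + ((R s)ᵀ *ᵥ (L *ᵥ (R s *ᵥ v s)))) i := by
      simp only [Matrix.mulVec, dotProduct, Matrix.transpose_apply, Pi.add_apply,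
        Finset.sum_add_distrib]
    have hDeq : E s i
        = ((((z s + (R s)ᵀ.mulVec (L.mulVec (q s))) ⨯₃ ω s + (R s)ᵀ.mulVec g + a s
          + (skew (ω s)).mulVec ((R s)ᵀ.mulVec (L.mulVec (q s)))
          - (R s)ᵀ.mulVec (L.mulVec ((R s).mulVec
              (z s + (R s)ᵀ.mulVec (L.mulVec (q s)))))) i
          + (∑ j, ((R s * skew (ω s)) j i * (∑ k, L j k * q s k)
              + R s j i * (∑ k, L j k * ((R s *ᵥ v s) k)))))
         - (v s ⨯₃ ω s + (R s)ᵀ *ᵥ g + a s) i) := by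
      rw [hm1]
      have hk := congrFun (keyvec L (R s) (z s) (q s) (v s) (ω s) g (a s)) i
      simp only [hEdef, hvhat]
      rw [← hk]
      simp [Pi.add_apply, Pi.sub_apply]
    rw [hfun, hDeq]
    exact h1
  set W : ℝ → ℝ := fun s => ∑ i, (vhat s i - v s i) ^ 2 with hWdef
  have hW : ∀ s, HasDerivAt W (∑ i, 2 * (vhat s i - v s i) * E s i) s := by
    intro s
    apply HasDerivAt.fun_sum
    intro i _
    have h2 := (hE s i).fun_pow 2
    simpa using h2
  have horth : ∀ s (x : Fin 3 → ℝ), ∑ i, (R s *ᵥ x) i ^ 2 = ∑ i, x i ^ 2 := by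
    intro s x
    have h2 : (R s *ᵥ x) ⬝ᵥ (R s *ᵥ x) = x ⬝ᵥ x := by
      rw [dotProduct_mulVec, ← vecMul_transpose, vecMul_vecMul, hRtR s, vecMul_one]
    simpa [dotProduct, pow_two] using h2
  have habs : ∀ (M : Matrix (Fin 3) (Fin 3) ℝ) (x y : Fin 3 → ℝ),
      ∑ i, x i * (Mᵀ *ᵥ y) i = ∑ i, y i * (M *ᵥ x) i := by
    intro M x y
    have h := dotProduct_mulVec x Mᵀ y
    rw [vecMul_transpose] at h
    simpa [dotProduct, mul_comm] using h
  have hbound : ∀ s, (∑ i, 2 * (vhat s i - v s i) * E s i) ≤ -(2 * m) * W s := by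
    intro s
    have hcross : ∑ i, (vhat s i - v s i) * (((vhat s - v s) ⨯₃ ω s) i) = 0 := by
      simp [cross_apply, Fin.sum_univ_three, Pi.sub_apply]
      ring
    have hquad : ∑ i, (vhat s i - v s i)
          * (((R s)ᵀ *ᵥ (L *ᵥ (R s *ᵥ (vhat s - v s)))) i)
        = ∑ i, (L *ᵥ (R s *ᵥ (vhat s - v s))) i * ((R s *ᵥ (vhat s - v s)) i) := by
      have h := habs (R s) (vhat s - v s) (L *ᵥ (R s *ᵥ (vhat s - v s)))
      simpa [Pi.sub_apply] using h
    have hexpand : ∑ i, 2 * (vhat s i - v s i) * E s i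
        = 2 * (∑ i, (vhat s i - v s i) * (((vhat s - v s) ⨯₃ ω s) i))
          - 2 * (∑ i, (vhat s i - v s i)
              * (((R s)ᵀ *ᵥ (L *ᵥ (R s *ᵥ (vhat s - v s)))) i)) := by
      simp only [hEdef, Pi.sub_apply]
      rw [Finset.mul_sum, Finset.mul_sum, ← Finset.sum_sub_distrib]
      exact Finset.sum_congr rfl fun i _ => by ring
    have hcoer := hL_coercive (R s *ᵥ (vhat s - v s))
    have hnorm := horth s (vhat s - v s)
    rw [hexpand, hcross, hquad]
    have hWs : W s = ∑ i, (vhat s i - v s i) ^ 2 := rfl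
    rw [hWs]
    have hnorm' : ∑ i, (R s *ᵥ (vhat s - v s)) i ^ 2
        = ∑ i, (vhat s i - v s i) ^ 2 := by
      rw [hnorm]
      exact Finset.sum_congr rfl fun i _ => by rw [Pi.sub_apply]
    rw [← hnorm']
    linarith [hcoer]
  have hF : ∀ s, HasDerivAt (fun u => Real.exp (2 * m * u) * W u)
      (Real.exp (2 * m * s) * (2 * m * 1) * W s
        + Real.exp (2 * m * s) * (∑ i, 2 * (vhat s i - v s i) * E s i)) s := by
    intro s
    exact (((hasDerivAt_id s).const_mul (2 * m)).exp).mul (hW s)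
  have hanti : Antitone (fun u => Real.exp (2 * m * u) * W u) := by
    apply antitone_of_deriv_nonpos
    · exact fun s => (hF s).differentiableAt
    · intro s
      rw [(hF s).deriv]
      have hb := hbound s
      have he := Real.exp_pos (2 * m * s)
      nlinarith [mul_le_mul_of_nonneg_left hb (le_of_lt he)]
  have hWle : W t ≤ Real.exp (-(2 * m * (t - t₀))) * W t₀ := by
    have h1 := hanti ht
    have h2 := mul_le_mul_of_nonneg_left h1 (Real.exp_nonneg (-(2 * m * t)))
    calc W t = Real.exp (-(2 * m * t)) * (Real.exp (2 * m * t) * W t) := by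
          rw [← mul_assoc, ← Real.exp_add]; simp
      _ ≤ Real.exp (-(2 * m * t)) * (Real.exp (2 * m * t₀) * W t₀) := h2
      _ = Real.exp (-(2 * m * (t - t₀))) * W t₀ := by
          rw [← mul_assoc, ← Real.exp_add]; ring_nf
  have key : Real.sqrt (W t) ≤ Real.exp (-(m * (t - t₀))) * Real.sqrt (W t₀) := by
    have h1 : Real.sqrt (W t) ≤ Real.sqrt (Real.exp (-(2 * m * (t - t₀))) * W t₀) :=
      Real.sqrt_le_sqrt hWle
    rw [Real.sqrt_mul (Real.exp_nonneg _)] at h1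
    have h2 : Real.sqrt (Real.exp (-(2 * m * (t - t₀))))
        = Real.exp (-(m * (t - t₀))) := by
      rw [show -(2 * m * (t - t₀)) = -(m * (t - t₀)) + -(m * (t - t₀)) by ring,
        Real.exp_add, Real.sqrt_mul_self (Real.exp_nonneg _)]
    rwa [h2] at h1
  have henorm : ∀ u : ℝ, enorm3 (vhat u - v u) = Real.sqrt (W u) := by
    intro u
    simp [enorm3, hWdef]
  rw [henorm, henorm]
  exact key
end
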